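/- Let E be a real normed vector space, t ∈ ℝ, Δt > 0, and let f : ℝ → E be twice differentiable on the interval [t, t + Δt] with ‖f''(s)‖ ≤ K for all s ∈ [t, t + Δt]. Let α ∈ [0, 1] and let k, M be integers with M ≥ 1 and 0 ≤ k ≤ M − 1. Then the stage prediction coefficient combination satisfies ‖(k/M)·f(t + Δt) + (1/M)·f(t + αΔt) + (1 − (k+1)/M)·f(t) − f(t + ((k+α)/M)Δt)‖ ≤ (3/2)·K·Δt²; in particular (taking α = 1/3 and α = 1/2), the FB-LTS predictions of the first-stage data at times t^{n,k+1/3} and of the second-stage data at times t^{n,k+1/2} are second-order accurate in Δt. -/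

import Mathlib

open Set

theorem fblts_stage_prediction_second_order
    {E : Type*} [NormedAddCommGroup E] [NormedSpace ℝ E]
    (t Δt : ℝ) (hΔt : 0 < Δt)
    (f f' f'' : ℝ → E) (K : ℝ)
    (hf' : ∀ s ∈ Set.Icc t (t + Δt),
      HasDerivWithinAt f (f' s) (Set.Icc t (t + Δt)) s)
    (hf'' : ∀ s ∈ Set.Icc t (t + Δt),
      HasDerivWithinAt f' (f'' s) (Set.Icc t (t + Δt)) s)
    (hK : ∀ s ∈ Set.Icc t (t + Δt), ‖f'' s‖ ≤ K)
    (α : ℝ) (hα : α ∈ Set.Icc (0 : ℝ) 1)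
    (k M : ℕ) (hM : 1 ≤ M) (hk : k ≤ M - 1) :
    ‖((k : ℝ) / M) • f (t + Δt) + ((1 : ℝ) / M) • f (t + α * Δt)
        + (1 - ((k : ℝ) + 1) / M) • f t
        - f (t + (((k : ℝ) + α) / M) * Δt)‖ ≤ (3 / 2) * K * Δt ^ 2 := by
  have hK0 : 0 ≤ K := le_trans (norm_nonneg _) (hK t ⟨le_rfl, by linarith⟩)
  have hMpos : (0:ℝ) < M := by exact_mod_cast hM
  -- Lipschitz bound for f'
  have lip : ∀ x ∈ Icc t (t + Δt), ∀ y ∈ Icc t (t + Δt), ‖f' x - f' y‖ ≤ K * ‖x - y‖ :=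
    fun x hx y hy => (convex_Icc t (t + Δt)).norm_image_sub_le_of_norm_hasDerivWithin_le
      hf'' hK hy hx
  -- membership helper
  have hmem : ∀ s ∈ Icc (0:ℝ) Δt, t + s ∈ Icc t (t + Δt) := by
    intro s hs; exact ⟨by linarith [hs.1], by linarith [hs.2]⟩
  -- Taylor remainder bound
  have key : ∀ s ∈ Icc (0:ℝ) Δt, ‖f (t + s) - f t - s • f' t‖ ≤ K / 2 * s ^ 2 := by
    set g : ℝ → E := fun s => f (t + s) - f t - s • f' t with hg_def
    have hgc : ContinuousOn g (Icc 0 Δt) := by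
      have hfc : ContinuousOn f (Icc t (t + Δt)) :=
        fun x hx => (hf' x hx).continuousWithinAt
      have : ContinuousOn (fun s : ℝ => f (t + s)) (Icc 0 Δt) :=
        hfc.comp (by fun_prop) (fun s hs => hmem s hs)
      exact (this.sub continuousOn_const).sub (by fun_prop)
    have hg' : ∀ s ∈ Ico (0:ℝ) Δt,
        HasDerivWithinAt g (f' (t + s) - f' t) (Ici s) s := by
      intro s hs
      have h1 : HasDerivWithinAt (fun u : ℝ => f (t + u)) (f' (t + s)) (Icc 0 Δt) s := by
        have hin : HasDerivWithinAt (fun u : ℝ => t + u) 1 (Icc 0 Δt) s :=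
          ((hasDerivAt_id s).const_add t).hasDerivWithinAt
        have := (hf' (t + s) (hmem s ⟨hs.1, hs.2.le⟩)).scomp s hin
          (fun u hu => hmem u hu)
        simpa [Function.comp_def] using this
      have h2 : HasDerivWithinAt (fun u : ℝ => f (t + u)) (f' (t + s)) (Ici s) s :=
        h1.mono_of_mem_nhdsWithin (Icc_mem_nhdsGE_of_mem ⟨hs.1, hs.2⟩)
      have h3 : HasDerivWithinAt (fun u : ℝ => u • f' t) (f' t) (Ici s) s := by
        simpa using ((hasDerivAt_id s).smul_const (f' t)).hasDerivWithinAt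
      have := (h2.sub (hasDerivWithinAt_const s (Ici s) (f t))).sub h3
      rw [sub_zero] at this
      exact this
    have bound : ∀ s ∈ Ico (0:ℝ) Δt, ‖f' (t + s) - f' t‖ ≤ K * s := by
      intro s hs
      have := lip (t + s) (hmem s ⟨hs.1, hs.2.le⟩) t ⟨le_rfl, by linarith⟩
      simpa [abs_of_nonneg hs.1] using this
    have hB : ∀ s : ℝ, HasDerivAt (fun s => K / 2 * s ^ 2) (K * s) s := by
      intro s
      have := ((hasDerivAt_pow 2 s).const_mul (K / 2))
      exact this.congr_deriv (by ring)
    have := image_norm_le_of_norm_deriv_right_le_deriv_boundary hgc hg'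
      (by simp [hg_def]) hB bound
    intro s hs
    exact this hs
  -- abbreviations
  set a : ℝ := (k : ℝ) / M with ha_def
  set b : ℝ := (1 : ℝ) / M with hb_def
  set τ : ℝ := (((k : ℝ) + α) / M) * Δt with hτ_def
  have hkM : (k : ℝ) + 1 ≤ M := by
    have : k + 1 ≤ M := by omega
    exact_mod_cast this
  have ha1 : 0 ≤ a ∧ a ≤ 1 := by
    constructor
    · positivity
    · rw [ha_def, div_le_one hMpos]; linarith
  have hb1 : 0 ≤ b ∧ b ≤ 1 := by
    constructor
    · positivity
    · rw [hb_def, div_le_one hMpos]; linarith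
  have hτmem : τ ∈ Icc (0:ℝ) Δt := by
    constructor
    · exact mul_nonneg (div_nonneg (add_nonneg (Nat.cast_nonneg k) hα.1) hMpos.le) hΔt.le
    · rw [hτ_def]
      have h1 : ((k : ℝ) + α) / M ≤ 1 := by
        rw [div_le_one hMpos]; linarith [hα.2]
      nlinarith
  have hαΔ : α * Δt ∈ Icc (0:ℝ) Δt :=
    ⟨mul_nonneg hα.1 hΔt.le, by nlinarith [hα.1, hα.2]⟩
  have hΔ : Δt ∈ Icc (0:ℝ) Δt := ⟨hΔt.le, le_rfl⟩
  have R1 := key Δt hΔ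
  have R2 := key (α * Δt) hαΔ
  have R3 := key τ hτmem
  -- rewrite the combination
  have hcomb : a • f (t + Δt) + b • f (t + α * Δt)
      + (1 - ((k : ℝ) + 1) / M) • f t - f (t + τ)
      = a • (f (t + Δt) - f t - Δt • f' t)
        + b • (f (t + α * Δt) - f t - (α * Δt) • f' t)
        - (f (t + τ) - f t - τ • f' t) := by
    have hc : (1 - ((k : ℝ) + 1) / M) = 1 - a - b := by
      rw [ha_def, hb_def]; ring
    have hlin : a * Δt + b * (α * Δt) = τ := by
      rw [ha_def, hb_def, hτ_def]; ring
    rw [hc]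
    have : a • (Δt • f' t) + b • ((α * Δt) • f' t) = τ • f' t := by
      rw [smul_smul, smul_smul, ← add_smul, hlin]
    rw [smul_sub, smul_sub, smul_sub, smul_sub, sub_smul, sub_smul, one_smul, ← this]
    abel
  rw [hcomb]
  have h1 : ‖a • (f (t + Δt) - f t - Δt • f' t)‖ ≤ K / 2 * Δt ^ 2 := by
    rw [norm_smul, Real.norm_eq_abs, abs_of_nonneg ha1.1]
    calc a * ‖f (t + Δt) - f t - Δt • f' t‖ ≤ 1 * (K / 2 * Δt ^ 2) := by
          apply mul_le_mul ha1.2 R1 (norm_nonneg _) zero_le_one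
      _ = K / 2 * Δt ^ 2 := one_mul _
  have h2 : ‖b • (f (t + α * Δt) - f t - (α * Δt) • f' t)‖ ≤ K / 2 * Δt ^ 2 := by
    rw [norm_smul, Real.norm_eq_abs, abs_of_nonneg hb1.1]
    calc b * ‖f (t + α * Δt) - f t - (α * Δt) • f' t‖ ≤ 1 * (K / 2 * (α * Δt) ^ 2) := by
          apply mul_le_mul hb1.2 R2 (norm_nonneg _) zero_le_one
      _ ≤ K / 2 * Δt ^ 2 := by
          have := pow_le_pow_left₀ hαΔ.1 hαΔ.2 2
          nlinarith
  have h3 : ‖f (t + τ) - f t - τ • f' t‖ ≤ K / 2 * Δt ^ 2 := by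
    refine R3.trans ?_
    have := pow_le_pow_left₀ hτmem.1 hτmem.2 2
    nlinarith
  calc ‖a • (f (t + Δt) - f t - Δt • f' t)
        + b • (f (t + α * Δt) - f t - (α * Δt) • f' t)
        - (f (t + τ) - f t - τ • f' t)‖
      ≤ ‖a • (f (t + Δt) - f t - Δt • f' t)
        + b • (f (t + α * Δt) - f t - (α * Δt) • f' t)‖
        + ‖f (t + τ) - f t - τ • f' t‖ := norm_sub_le _ _
    _ ≤ ‖a • (f (t + Δt) - f t - Δt • f' t)‖
        + ‖b • (f (t + α * Δt) - f t - (α * Δt) • f' t)‖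
        + ‖f (t + τ) - f t - τ • f' t‖ := by
          gcongr; exact norm_add_le _ _
    _ ≤ K / 2 * Δt ^ 2 + K / 2 * Δt ^ 2 + K / 2 * Δt ^ 2 := by
          gcongr
    _ = (3 / 2) * K * Δt ^ 2 := by ring
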